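/- Let (X,T) be a minimal Cantor system with a nested sequence of clopen Kakutani–Rohlin partitions satisfying (KR1)–(KR6), and let λ = exp(2πiα) be a continuous eigenvalue of (X,T). For each n, write α·P_n H_1 = v_n + w_n where w_n ∈ ℤ^{C_n} is a closest integer vector to α·P_n H_1 (so every entry of v_n has absolute value at most 1/2). Then max_{x ∈ X} |⟨s_n(x), v_n⟩| → 0 as n → ∞. -/

import Mathlib

open MeasureTheory

/-- A nested sequence of clopen Kakutani–Rohlin partitions of a Cantor system `(X,T)`
satisfying (KR1)–(KR6), with the conventions `C 0 = 1`, `h 0 = 1`, `B 0 = X` and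
`h 1 (k) = 1`.  The atoms of the `n`-th partition are the sets `T^j (B n k)` for
`0 ≤ j < h n k`. -/
structure KRSystem (X : Type*) [TopologicalSpace X] (T : X ≃ₜ X) where
  /-- number of towers at level `n` -/
  C : ℕ → ℕ
  C_pos : ∀ n, 0 < C n
  /-- bases of the towers -/
  B : (n : ℕ) → Fin (C n) → Set X
  /-- heights of the towers -/
  h : (n : ℕ) → Fin (C n) → ℕ
  h_pos : ∀ n k, 0 < h n k
  clopen : ∀ n k, IsClopen (B n k)
  C_zero : C 0 = 1
  h_zero : ∀ k, h 0 k = 1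
  B_zero : ∀ k, B 0 k = Set.univ
  h_one : ∀ k, h 1 k = 1
  /-- the atoms `T^j (B n k)`, `0 ≤ j < h n k`, are pairwise disjoint -/
  disj : ∀ n, ∀ k k' : Fin (C n), ∀ j j' : ℕ, j < h n k → j' < h n k' →
    (k ≠ k' ∨ j ≠ j') → Disjoint ((⇑T)^[j] '' B n k) ((⇑T)^[j'] '' B n k')
  /-- the atoms cover `X` -/
  cover : ∀ n, (⋃ (k : Fin (C n)) (j : ℕ) (_ : j < h n k), (⇑T)^[j] '' B n k) = Set.univ
  /-- `⋃ k, T^{h n k} (B n k) = ⋃ k, B n k` -/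
  ret : ∀ n, (⋃ k : Fin (C n), (⇑T)^[h n k] '' B n k) = ⋃ k : Fin (C n), B n k
  /-- (KR1) -/
  kr1 : ∀ n, (⋃ k : Fin (C (n + 1)), B (n + 1) k) ⊆ ⋃ k : Fin (C n), B n k
  /-- (KR2) the `(n+1)`-st partition refines the `n`-th one -/
  kr2 : ∀ n, ∀ l : Fin (C (n + 1)), ∀ j : ℕ, j < h (n + 1) l →
    ∃ k : Fin (C n), ∃ i : ℕ, i < h n k ∧ (⇑T)^[j] '' B (n + 1) l ⊆ (⇑T)^[i] '' B n k
  /-- (KR3) the intersection of the bases is a single point -/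
  kr3 : ∃ x : X, (⋂ n, ⋃ k : Fin (C n), B n k) = {x}
  /-- (KR4) the atoms span the topology of `X` -/
  kr4 : ∀ U : Set X, IsOpen U → ∀ x ∈ U, ∃ n, ∃ k : Fin (C n), ∃ j : ℕ,
    j < h n k ∧ x ∈ (⇑T)^[j] '' B n k ∧ (⇑T)^[j] '' B n k ⊆ U
  /-- (KR5) -/
  kr5 : ∀ n, ∀ k : Fin (C n), ∀ l : Fin (C (n + 1)), ∃ j : ℕ,
    j < h (n + 1) l ∧ (⇑T)^[j] '' B (n + 1) l ⊆ B n k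
  /-- (KR6) -/
  kr6 : ∀ n, (⋃ k : Fin (C (n + 1)), B (n + 1) k) ⊆ B n ⟨0, C_pos n⟩

variable {X : Type*} [TopologicalSpace X] {T : X ≃ₜ X}

/-- The incidence matrix between levels `n` and `n+1`; `KRM S n` corresponds to `M_{n+1}`
of the paper. -/
noncomputable def KRM (S : KRSystem X T) (n : ℕ) :
    Matrix (Fin (S.C (n + 1))) (Fin (S.C n)) ℤ := fun l k =>
  (Nat.card {j : ℕ // j < S.h (n + 1) l ∧ (⇑T)^[j] '' S.B (n + 1) l ⊆ S.B n k} : ℤ)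

/-- `KRP S m d` is the matrix `P_{m+d,m} = M_{m+d} ⋯ M_{m+1}` of the paper
(with `KRP S m 0 = 1`). -/
noncomputable def KRP (S : KRSystem X T) (m : ℕ) :
    (d : ℕ) → Matrix (Fin (S.C (m + d))) (Fin (S.C m)) ℤ
  | 0 => (1 : Matrix (Fin (S.C m)) (Fin (S.C m)) ℤ)
  | d + 1 => KRM S (m + d) * KRP S m d

/-- entrance time of `x` to the base of the `n`-th partition -/
noncomputable def KREntrance (S : KRSystem X T) (n : ℕ) (x : X) : ℕ :=
  sInf {j : ℕ | (⇑T)^[j] x ∈ ⋃ k : Fin (S.C n), S.B n k}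

/-- the suffix vector `s_n(x)` -/
noncomputable def KRSuffix (S : KRSystem X T) (n : ℕ) (x : X) (k : Fin (S.C n)) : ℕ :=
  Nat.card {j : ℕ // j < KREntrance S (n + 1) x ∧ (⇑T)^[j] x ∈ S.B n k}

section Aux

attribute [local instance] Classical.propDecidable

private lemma nat_card_lt_and (N : ℕ) (P : ℕ → Prop) :
    Nat.card {j : ℕ // j < N ∧ P j} = ((Finset.range N).filter P).card := by
  have h : {j : ℕ | j < N ∧ P j} = ↑((Finset.range N).filter P) := by
    ext j; simp [Finset.mem_filter]
  calc Nat.card {j : ℕ // j < N ∧ P j} = Set.ncard {j : ℕ | j < N ∧ P j} :=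
        Nat.card_coe_set_eq _
    _ = _ := by rw [h, Set.ncard_coe_finset]

private lemma card_filter_range_add (P : ℕ → Prop) (a b : ℕ) :
    ((Finset.range (a + b)).filter P).card
      = ((Finset.range a).filter P).card
        + ((Finset.range b).filter (fun j => P (a + j))).card := by
  induction b with
  | zero => simp
  | succ b ih =>
    rw [Nat.add_succ, Finset.range_add_one, Finset.range_add_one, Finset.filter_insert,
      Finset.filter_insert]
    by_cases hP : P (a + b)
    · rw [if_pos hP, if_pos hP, Finset.card_insert_of_notMem (by simp),
        Finset.card_insert_of_notMem (by simp), ih]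
      omega
    · rw [if_neg hP, if_neg hP, ih]

end Aux

section KRLemmas

attribute [local instance] Classical.propDecidable

variable {X : Type*} [TopologicalSpace X] {T : X ≃ₜ X}

/-- union of the bases at level `n` -/
def KRBase (S : KRSystem X T) (n : ℕ) : Set X := ⋃ k : Fin (S.C n), S.B n k

lemma KRBase_anti (S : KRSystem X T) : Antitone (KRBase S) :=
  antitone_nat_of_succ_le fun n => S.kr1 n

lemma exists_iter_mem_KRBase (S : KRSystem X T) (n : ℕ) (x : X) :
    ∃ j, (⇑T)^[j] x ∈ KRBase S n := by
  have hx : x ∈ ⋃ (k : Fin (S.C n)) (j : ℕ) (_ : j < S.h n k), (⇑T)^[j] '' S.B n k := by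
    rw [S.cover n]; exact Set.mem_univ x
  simp only [Set.mem_iUnion] at hx
  obtain ⟨k, j, hj, hxin⟩ := hx
  obtain ⟨y, hy, rfl⟩ := hxin
  refine ⟨S.h n k - j, ?_⟩
  have h1 : (⇑T)^[S.h n k - j] ((⇑T)^[j] y) = (⇑T)^[S.h n k] y := by
    rw [← Function.iterate_add_apply]; congr 1; omega
  rw [h1]
  have h2 : (⇑T)^[S.h n k] y ∈ ⋃ k : Fin (S.C n), (⇑T)^[S.h n k] '' S.B n k :=
    Set.mem_iUnion.2 ⟨k, ⟨y, hy, rfl⟩⟩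
  rw [S.ret n] at h2
  exact h2

lemma KREntrance_mem (S : KRSystem X T) (n : ℕ) (x : X) :
    (⇑T)^[KREntrance S n x] x ∈ KRBase S n :=
  Nat.sInf_mem (exists_iter_mem_KRBase S n x)

lemma KREntrance_not_mem (S : KRSystem X T) (n : ℕ) (x : X) {j : ℕ}
    (hj : j < KREntrance S n x) : (⇑T)^[j] x ∉ KRBase S n :=
  Nat.notMem_of_lt_sInf hj

lemma KREntrance_le (S : KRSystem X T) (n : ℕ) (x : X) {j : ℕ}
    (hj : (⇑T)^[j] x ∈ KRBase S n) : KREntrance S n x ≤ j :=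
  Nat.sInf_le hj

lemma KREntrance_eq_zero (S : KRSystem X T) (n : ℕ) {y : X} (hy : y ∈ KRBase S n) :
    KREntrance S n y = 0 :=
  Nat.eq_zero_of_le_zero (KREntrance_le S n y (by simpa using hy))

lemma mem_base_unique (S : KRSystem X T) (n : ℕ) {k k' : Fin (S.C n)} {y : X}
    (hy : y ∈ S.B n k) (hy' : y ∈ S.B n k') : k = k' := by
  by_contra hne
  have hd := S.disj n k k' 0 0 (S.h_pos n k) (S.h_pos n k') (Or.inl hne)
  simp only [Function.iterate_zero, Set.image_id, Set.image_id'] at hd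
  exact Set.disjoint_left.1 hd hy hy'

lemma iter_base_not_mem (S : KRSystem X T) (n : ℕ) (k : Fin (S.C n)) {y : X}
    (hy : y ∈ S.B n k) {i : ℕ} (h0 : 0 < i) (hi : i < S.h n k) :
    (⇑T)^[i] y ∉ KRBase S n := by
  intro hmem
  obtain ⟨k', hk'⟩ := Set.mem_iUnion.1 hmem
  have hd := S.disj n k k' i 0 hi (S.h_pos n k') (Or.inr (by omega))
  have h1 : (⇑T)^[i] y ∈ (⇑T)^[i] '' S.B n k := ⟨y, hy, rfl⟩
  have h2 : (⇑T)^[i] y ∈ (⇑T)^[0] '' S.B n k' := by simpa using hk'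
  exact Set.disjoint_left.1 hd h1 h2

lemma iter_height_mem (S : KRSystem X T) (n : ℕ) (k : Fin (S.C n)) {y : X}
    (hy : y ∈ S.B n k) : (⇑T)^[S.h n k] y ∈ KRBase S n := by
  have h2 : (⇑T)^[S.h n k] y ∈ ⋃ k : Fin (S.C n), (⇑T)^[S.h n k] '' S.B n k :=
    Set.mem_iUnion.2 ⟨k, ⟨y, hy, rfl⟩⟩
  rw [S.ret n] at h2
  exact h2

lemma KRSuffix_eq_card (S : KRSystem X T) (n : ℕ) (x : X) (k : Fin (S.C n)) :
    KRSuffix S n x k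
      = ((Finset.range (KREntrance S (n + 1) x)).filter
          (fun j => (⇑T)^[j] x ∈ S.B n k)).card :=
  nat_card_lt_and _ _

lemma KREntrance_shift (S : KRSystem X T) (n : ℕ) (x : X) (t : ℕ)
    (ht : ∀ j < t, (⇑T)^[j] x ∉ KRBase S n) :
    KREntrance S n x = t + KREntrance S n ((⇑T)^[t] x) := by
  have h1 : ∀ j : ℕ, (⇑T)^[j] ((⇑T)^[t] x) = (⇑T)^[j + t] x := fun j =>
    (Function.iterate_add_apply _ j t x).symm
  have hr := KREntrance_mem S n x
  have htr : t ≤ KREntrance S n x := by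
    by_contra hc
    push_neg at hc
    exact ht _ hc hr
  apply le_antisymm
  · have h2 := KREntrance_mem S n ((⇑T)^[t] x)
    rw [h1] at h2
    have h3 := KREntrance_le S n x h2
    omega
  · have h4 : (⇑T)^[KREntrance S n x - t] ((⇑T)^[t] x) ∈ KRBase S n := by
      rw [h1, show KREntrance S n x - t + t = KREntrance S n x by omega]
      exact hr
    have h5 := KREntrance_le S n ((⇑T)^[t] x) h4
    omega

lemma KRSuffix_shift (S : KRSystem X T) (n : ℕ) (x : X) (t : ℕ)
    (ht : ∀ j < t, (⇑T)^[j] x ∉ KRBase S (n + 1)) (k : Fin (S.C n)) :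
    KRSuffix S n x k
      = ((Finset.range t).filter (fun j => (⇑T)^[j] x ∈ S.B n k)).card
        + KRSuffix S n ((⇑T)^[t] x) k := by
  rw [KRSuffix_eq_card, KRSuffix_eq_card, KREntrance_shift S (n + 1) x t ht,
    card_filter_range_add]
  congr 1
  exact congrArg Finset.card (Finset.filter_congr (fun j _ => by
    rw [Nat.add_comm t j, Function.iterate_add_apply]))

end KRLemmas

section KRKey

attribute [local instance] Classical.propDecidable

variable {X : Type*} [TopologicalSpace X] {T : X ≃ₜ X}

lemma KRkey (S : KRSystem X T) (n : ℕ) (v : Fin (S.C n) → ℝ)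
    (hv : ∀ k, |v k| ≤ 1 / 2) :
    ∀ r : ℕ, ∀ x : X, KREntrance S (n + 1) x = r →
      (r = KREntrance S n x + ∑ k, KRSuffix S n x k * S.h n k) ∧
      (∀ η : ℝ, 0 ≤ η → η < 1 / 4 →
        (∀ y : X, ∃ m : ℤ, |(∑ k, (KRSuffix S n y k : ℝ) * v k) - m| ≤ η) →
        |∑ k, (KRSuffix S n x k : ℝ) * v k| ≤ η) := by
  intro r
  induction r using Nat.strong_induction_on with
  | _ r ih =>
  intro x hx
  set t := KREntrance S n x with htdef
  have hrmem : (⇑T)^[r] x ∈ KRBase S (n + 1) := by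
    rw [← hx]; exact KREntrance_mem S (n + 1) x
  have hrmem' : (⇑T)^[r] x ∈ KRBase S n := KRBase_anti S (Nat.le_succ n) hrmem
  have hrt : t ≤ r := KREntrance_le S n x hrmem'
  have htmem : (⇑T)^[t] x ∈ KRBase S n := KREntrance_mem S n x
  by_cases hcase : (⇑T)^[t] x ∈ KRBase S (n + 1)
  · -- the first entrance to the `n`-th base is already in the `(n+1)`-st base
    have hrle : r ≤ t := by rw [← hx]; exact KREntrance_le S (n + 1) x hcase
    have hrt' : r = t := le_antisymm hrle hrt
    have hs0 : ∀ k, KRSuffix S n x k = 0 := by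
      intro k
      rw [KRSuffix_eq_card, hx, Finset.card_eq_zero, Finset.eq_empty_iff_forall_notMem]
      intro j hj
      simp only [Finset.mem_filter, Finset.mem_range] at hj
      exact KREntrance_not_mem S n x (show j < t by omega)
        (Set.mem_iUnion.2 ⟨k, hj.2⟩)
    constructor
    · simp [hs0, hrt']
    · intro η hη0 _ _
      simpa [hs0] using hη0
  · -- we must first climb a full tower of level `n`
    obtain ⟨k, hk⟩ := Set.mem_iUnion.1 htmem
    have hhpos : 0 < S.h n k := S.h_pos n k
    -- any visit to a base of level `n` before time `t + h n k` happens at time `t`,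
    -- in the tower `k`
    have hjt : ∀ j < t + S.h n k, ∀ κ : Fin (S.C n), (⇑T)^[j] x ∈ S.B n κ →
        j = t ∧ κ = k := by
      intro j hj κ hmem
      have hj_eq : j = t := by
        by_contra hne
        rcases Nat.lt_or_ge j t with hlt | hge
        · exact KREntrance_not_mem S n x hlt (Set.mem_iUnion.2 ⟨κ, hmem⟩)
        · have h0 : 0 < j - t := by omega
          have h2 := iter_base_not_mem S n k hk h0 (show j - t < S.h n k by omega)
          apply h2
          rw [← Function.iterate_add_apply, show j - t + t = j by omega]
          exact Set.mem_iUnion.2 ⟨κ, hmem⟩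
      subst hj_eq
      exact ⟨rfl, mem_base_unique S n hmem hk⟩
    have hno : ∀ j < t + S.h n k, (⇑T)^[j] x ∉ KRBase S (n + 1) := by
      intro j hj hmem
      have hmem' := KRBase_anti S (Nat.le_succ n) hmem
      obtain ⟨κ, hκ⟩ := Set.mem_iUnion.1 hmem'
      obtain ⟨hjeq, -⟩ := hjt j hj κ hκ
      subst hjeq
      exact hcase hmem
    have ht'r : t + S.h n k ≤ r := by
      by_contra hc
      push_neg at hc
      exact hno r hc hrmem
    set x₂ := (⇑T)^[t + S.h n k] x with hx2def
    have hx2base : x₂ ∈ KRBase S n := by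
      have h3 := iter_height_mem S n k hk
      rw [← Function.iterate_add_apply, Nat.add_comm] at h3
      exact h3
    have hent2 : KREntrance S n x₂ = 0 := KREntrance_eq_zero S n hx2base
    have hshift : r = (t + S.h n k) + KREntrance S (n + 1) x₂ := by
      rw [← hx]; exact KREntrance_shift S (n + 1) x (t + S.h n k) hno
    set r₂ := KREntrance S (n + 1) x₂ with hr2def
    have hr2lt : r₂ < r := by omega
    obtain ⟨ihsum, ihabs⟩ := ih r₂ hr2lt x₂ rfl
    -- the suffix of `x` equals the suffix of `x₂` plus one crossing of tower `k`
    have hsfx : ∀ κ, KRSuffix S n x κ = (if κ = k then 1 else 0) + KRSuffix S n x₂ κ := by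
      intro κ
      rw [KRSuffix_shift S n x (t + S.h n k) hno κ]
      congr 1
      have hfil : (Finset.range (t + S.h n k)).filter (fun j => (⇑T)^[j] x ∈ S.B n κ)
          = if κ = k then {t} else ∅ := by
        by_cases hκ : κ = k
        · subst hκ
          rw [if_pos rfl]
          ext j
          simp only [Finset.mem_filter, Finset.mem_range, Finset.mem_singleton]
          constructor
          · rintro ⟨hj, hmem⟩
            exact (hjt j hj κ hmem).1
          · rintro rfl
            exact ⟨by omega, hk⟩
        · rw [if_neg hκ]
          ext j
          simp only [Finset.mem_filter, Finset.mem_range, Finset.notMem_empty, iff_false,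
            not_and]
          intro hj hmem
          exact hκ (hjt j hj κ hmem).2
      rw [hfil]
      by_cases hκ : κ = k <;> simp [hκ]
    constructor
    · -- the height identity
      have hA : ∑ κ, KRSuffix S n x κ * S.h n κ
          = S.h n k + ∑ κ, KRSuffix S n x₂ κ * S.h n κ := by
        simp only [hsfx, add_mul, Finset.sum_add_distrib, ite_mul, one_mul, zero_mul,
          Finset.sum_ite_eq', Finset.mem_univ, if_true]
      omega
    · -- the bound on the inner product with `v`
      intro η hη0 hη hall
      have hihabs := ihabs η hη0 hη hall
      have hθ : ∑ κ, (KRSuffix S n x κ : ℝ) * v κ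
          = v k + ∑ κ, (KRSuffix S n x₂ κ : ℝ) * v κ := by
        simp only [hsfx]
        push_cast
        simp only [add_mul, Finset.sum_add_distrib, ite_mul, one_mul, zero_mul,
          Finset.sum_ite_eq', Finset.mem_univ, if_true]
      obtain ⟨m, hm⟩ := hall x
      have h1 : |∑ κ, (KRSuffix S n x κ : ℝ) * v κ| ≤ η + 1 / 2 := by
        rw [hθ]
        calc |v k + ∑ κ, (KRSuffix S n x₂ κ : ℝ) * v κ|
            ≤ |v k| + |∑ κ, (KRSuffix S n x₂ κ : ℝ) * v κ| := abs_add_le _ _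
          _ ≤ 1 / 2 + η := add_le_add (hv k) hihabs
          _ = η + 1 / 2 := by ring
      have hm0 : m = 0 := by
        have h2 : |(m : ℝ)| < 1 := by
          have h3 := abs_sub_abs_le_abs_sub (∑ κ, (KRSuffix S n x κ : ℝ) * v κ) (m : ℝ)
          have h4 := abs_abs_sub_abs_le_abs_sub (∑ κ, (KRSuffix S n x κ : ℝ) * v κ) (m : ℝ)
          have h5 : |(m : ℝ)| ≤ |∑ κ, (KRSuffix S n x κ : ℝ) * v κ| + η := by
            have := abs_sub_abs_le_abs_sub (m : ℝ) (∑ κ, (KRSuffix S n x κ : ℝ) * v κ)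
            rw [abs_sub_comm] at hm
            linarith
          linarith
        by_contra hne
        have : (1 : ℝ) ≤ |(m : ℝ)| := by
          rw [← Int.cast_abs]
          exact_mod_cast Int.one_le_abs (by omega)
        linarith
      rw [hm0] at hm
      simpa using hm

end KRKey

section Analytic

/-- the character `θ ↦ exp(2πiθ)` -/
noncomputable def krE (θ : ℝ) : ℂ := Complex.exp (2 * Real.pi * Complex.I * θ)

lemma krE_add (a b : ℝ) : krE (a + b) = krE a * krE b := by
  rw [krE, krE, krE, ← Complex.exp_add]
  congr 1
  push_cast
  ring

lemma krE_int (m : ℤ) : krE (m : ℝ) = 1 := by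
  rw [krE, show (2 * Real.pi * Complex.I * ((m : ℝ) : ℂ)) = (m : ℤ) * (2 * Real.pi * Complex.I) by
    push_cast; ring]
  exact Complex.exp_int_mul_two_pi_mul_I m

lemma krE_zero : krE 0 = 1 := by
  have := krE_int 0
  simpa using this

private lemma sin_lower {u : ℝ} (h0 : 0 ≤ u) (h1 : u ≤ 1 / 2) :
    2 * u ≤ Real.sin (Real.pi * u) := by
  have hπ : 0 < Real.pi := Real.pi_pos
  have hle : Real.pi * u ≤ Real.pi / 2 := by nlinarith
  have h2 := Real.mul_le_sin (x := Real.pi * u) (by positivity) hle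
  have h3 : 2 / Real.pi * (Real.pi * u) = 2 * u := by
    field_simp
  rw [h3] at h2
  exact h2

lemma krE_lower {u : ℝ} (hu : |u| ≤ 1 / 2) : 4 * |u| ≤ ‖krE u - 1‖ := by
  set θ : ℝ := 2 * Real.pi * u with hθdef
  have hkey : krE u = (Real.cos θ : ℂ) + (Real.sin θ : ℂ) * Complex.I := by
    rw [krE, show (2 * Real.pi * Complex.I * (u : ℂ)) = (θ : ℂ) * Complex.I by
      rw [hθdef]; push_cast; ring, Complex.exp_mul_I, Complex.ofReal_cos, Complex.ofReal_sin]
  have habs : ‖krE u - 1‖ = Real.sqrt ((Real.cos θ - 1) ^ 2 + Real.sin θ ^ 2) := by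
    rw [hkey, show ((Real.cos θ : ℂ) + (Real.sin θ : ℂ) * Complex.I - 1)
        = ((Real.cos θ - 1 : ℝ) : ℂ) + ((Real.sin θ : ℝ) : ℂ) * Complex.I by push_cast; ring,
      Complex.norm_def, Complex.normSq_add_mul_I]
  have hpyth := Real.sin_sq_add_cos_sq (Real.pi * u)
  have hc2 : Real.cos θ = 1 - 2 * Real.sin (Real.pi * u) ^ 2 := by
    rw [show θ = 2 * (Real.pi * u) by rw [hθdef]; ring, Real.cos_two_mul']
    linarith
  have hsum : (Real.cos θ - 1) ^ 2 + Real.sin θ ^ 2 = (2 * Real.sin (Real.pi * u)) ^ 2 := by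
    have hpyth2 := Real.sin_sq_add_cos_sq θ
    nlinarith [hc2]
  rw [habs, hsum, Real.sqrt_sq_eq_abs, abs_mul, abs_two]
  have hmain : 2 * |u| ≤ |Real.sin (Real.pi * u)| := by
    rcases le_or_gt 0 u with hpos | hneg
    · rw [abs_of_nonneg hpos]
      exact le_trans (sin_lower hpos (by rwa [abs_of_nonneg hpos] at hu)) (le_abs_self _)
    · have h0 : 0 ≤ -u := by linarith
      have h1 : -u ≤ 1 / 2 := by rwa [abs_of_neg hneg] at hu
      have h2 := sin_lower h0 h1
      rw [abs_of_neg hneg]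
      calc 2 * -u ≤ Real.sin (Real.pi * -u) := h2
        _ = -Real.sin (Real.pi * u) := by rw [show Real.pi * -u = -(Real.pi * u) by ring,
            Real.sin_neg]
        _ ≤ |Real.sin (Real.pi * u)| := neg_le_abs _
  linarith

end Analytic

/-- Let `(X,T)` be a minimal Cantor system with a nested sequence of CKR
partitions satisfying (KR1)–(KR6), and let `exp(2πiα)` be a continuous eigenvalue.  Write
`α · P_n H_1 = v_n + w_n` with `w_n` a closest integer vector (entries of `v_n` of absolute
value `≤ 1/2`).  Then `max_{x ∈ X} |⟨s_n(x), v_n⟩| → 0` as `n → ∞`. -/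

theorem stmt8 {X : Type*} [TopologicalSpace X] [CompactSpace X]
    [TopologicalSpace.MetrizableSpace X] [TotallyDisconnectedSpace X] [Nonempty X]
    (hni : ∀ x : X, ¬IsOpen ({x} : Set X))
    (T : X ≃ₜ X)
    (hmin : ∀ x : X, Dense (Set.range fun n : ℤ => (T.toEquiv ^ n) x))
    (S : KRSystem X T)
    (α : ℝ)
    (heig : ∃ f : C(X, ℂ), f ≠ 0 ∧
      ∀ x : X, f (T x) = Complex.exp (2 * Real.pi * Complex.I * α) * f x)
    (w : (n : ℕ) → Fin (S.C n) → ℤ)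
    (hw : ∀ (n : ℕ) (l : Fin (S.C n)), |α * (S.h n l : ℝ) - (w n l : ℝ)| ≤ 1 / 2) :
    Filter.Tendsto
      (fun n : ℕ => ⨆ x : X,
        |∑ k : Fin (S.C n), (KRSuffix S n x k : ℝ) * (α * (S.h n k : ℝ) - (w n k : ℝ))|)
      Filter.atTop (nhds 0) := by
  classical
  obtain ⟨f, hf0, hf⟩ := heig
  -- the eigenfunction never vanishes, by minimality
  have hfne : ∀ x : X, f x ≠ 0 := by
    intro x₀ hx₀
    apply hf0
    have hz : ∀ m : ℤ, f ((T.toEquiv ^ m) x₀) = 0 := by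
      intro m
      induction m using Int.induction_on with
      | zero => simpa using hx₀
      | succ m ihm =>
        have hstep : (T.toEquiv ^ ((m : ℤ) + 1)) x₀ = T ((T.toEquiv ^ (m : ℤ)) x₀) := by
          rw [show (m : ℤ) + 1 = 1 + m by ring, zpow_one_add]
          rfl
        rw [hstep, hf, ihm, mul_zero]
      | pred m ihm =>
        have hstep : (T.toEquiv ^ (-(m : ℤ))) x₀ = T ((T.toEquiv ^ (-(m : ℤ) - 1)) x₀) := by
          conv_lhs => rw [show -(m : ℤ) = 1 + (-(m : ℤ) - 1) by ring]
          rw [zpow_one_add]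
          rfl
        have h2 := hf ((T.toEquiv ^ (-(m : ℤ) - 1)) x₀)
        rw [← hstep, ihm] at h2
        exact (mul_eq_zero.1 h2.symm).resolve_left (Complex.exp_ne_zero _)
    have hfzero : (⇑f) = fun _ => (0 : ℂ) :=
      Continuous.ext_on (hmin x₀) f.continuous continuous_const (by
        rintro - ⟨m, rfl⟩
        exact hz m)
    exact ContinuousMap.ext fun x => by rw [congrFun hfzero x]; rfl
  -- the modulus of the eigenfunction is bounded below
  obtain ⟨z, -, hz⟩ := isCompact_univ.exists_isMinOn Set.univ_nonempty
    ((continuous_norm.comp f.continuous).continuousOn)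
  set δ : ℝ := ‖f z‖ with hδdef
  have hδpos : 0 < δ := norm_pos_iff.mpr (hfne z)
  have hδle : ∀ x : X, δ ≤ ‖f x‖ := fun x => isMinOn_iff.1 hz x (Set.mem_univ x)
  -- iterating the eigenvalue equation
  have hiter : ∀ (m : ℕ) (x : X), f ((⇑T)^[m] x) = krE (α * m) * f x := by
    intro m
    induction m with
    | zero => intro x; simp [krE_zero]
    | succ m ihm =>
      intro x
      rw [Function.iterate_succ_apply', hf, ihm, ← mul_assoc]
      congr 1
      rw [show Complex.exp (2 * Real.pi * Complex.I * α) = krE α from rfl, ← krE_add]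
      congr 1
      push_cast
      ring
  obtain ⟨x₀, hx₀⟩ := S.kr3
  have hx₀' : (⋂ n, KRBase S n) = {x₀} := hx₀
  rw [Metric.tendsto_atTop]
  intro ε hε
  set η : ℝ := min (ε / 2) (1 / 8) with hηdef
  have hη0 : 0 < η := lt_min (by linarith) (by norm_num)
  have hη14 : η < 1 / 4 := lt_of_le_of_lt (min_le_right _ _) (by norm_num)
  have hηε : η < ε := lt_of_le_of_lt (min_le_left _ _) (by linarith)
  -- a neighborhood of x₀ on which f is almost constant
  set U : Set X := f ⁻¹' Metric.ball (f x₀) (η * δ) with hUdef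
  have hUopen : IsOpen U := (Metric.isOpen_ball).preimage f.continuous
  have hx₀U : x₀ ∈ U := by
    simp only [hUdef, Set.mem_preimage]
    exact Metric.mem_ball_self (mul_pos hη0 hδpos)
  have hdir : Directed (· ⊇ ·) (KRBase S) := fun a b =>
    ⟨max a b, KRBase_anti S (le_max_left a b), KRBase_anti S (le_max_right a b)⟩
  have hclosed : ∀ i, IsClosed (KRBase S i) := fun i =>
    isClosed_iUnion_of_finite fun k => (S.clopen i k).1
  have hcpt : ∀ i, IsCompact (KRBase S i) := fun i => (hclosed i).isCompact
  obtain ⟨N, hN⟩ := exists_subset_nhds_of_isCompact' hdir hcpt hclosed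
    (fun x hx => by
      rw [hx₀'] at hx
      rw [Set.mem_singleton_iff] at hx
      subst hx
      exact hUopen.mem_nhds hx₀U)
  refine ⟨N, fun n hn => ?_⟩
  set v : Fin (S.C n) → ℝ := fun k => α * (S.h n k : ℝ) - (w n k : ℝ) with hvdef
  show dist (⨆ x : X, |∑ k : Fin (S.C n), (KRSuffix S n x k : ℝ) * v k|) 0 < ε
  have hBU : KRBase S n ⊆ U := subset_trans (KRBase_anti S hn) hN
  have hclose : ∀ a ∈ KRBase S n, ∀ b ∈ KRBase S n,
      ‖f a - f b‖ < 2 * (η * δ) := by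
    intro a ha b hb
    have h1 : dist (f a) (f x₀) < η * δ := hBU ha
    have h2 : dist (f b) (f x₀) < η * δ := hBU hb
    calc ‖f a - f b‖ = dist (f a) (f b) := (Complex.dist_eq _ _).symm
      _ ≤ dist (f a) (f x₀) + dist (f x₀) (f b) := dist_triangle _ _ _
      _ < 2 * (η * δ) := by rw [dist_comm (f x₀) (f b)]; linarith
  -- every pairing is η-close to an integer
  have hall : ∀ y : X, ∃ m : ℤ, |(∑ k, (KRSuffix S n y k : ℝ) * v k) - m| ≤ η := by
    intro y
    set θ : ℝ := ∑ k, (KRSuffix S n y k : ℝ) * v k with hθdef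
    set r := KREntrance S (n + 1) y with hrdef
    set t := KREntrance S n y with htdef
    have hsum : r = t + ∑ k, KRSuffix S n y k * S.h n k :=
      (KRkey S n v (fun k => hw n k) r y rfl).1
    have hθW : θ = α * ((∑ k, KRSuffix S n y k * S.h n k : ℕ) : ℝ)
        - ((∑ k, (KRSuffix S n y k : ℤ) * w n k : ℤ) : ℝ) := by
      rw [hθdef]
      push_cast
      rw [Finset.mul_sum, ← Finset.sum_sub_distrib]
      apply Finset.sum_congr rfl
      intro k _
      rw [hvdef]
      ring
    have hMθ : krE (α * ((∑ k, KRSuffix S n y k * S.h n k : ℕ) : ℝ)) = krE θ := by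
      rw [show α * ((∑ k, KRSuffix S n y k * S.h n k : ℕ) : ℝ)
          = θ + ((∑ k, (KRSuffix S n y k : ℤ) * w n k : ℤ) : ℝ) by rw [hθW]; ring,
        krE_add, krE_int, mul_one]
    have hfr : f ((⇑T)^[r] y) = krE θ * f ((⇑T)^[t] y) := by
      rw [hiter r y, hiter t y, ← hMθ, ← mul_assoc, ← krE_add]
      congr 2
      rw [hsum]
      push_cast
      ring
    have hrB : (⇑T)^[r] y ∈ KRBase S n :=
      KRBase_anti S (Nat.le_succ n) (by rw [hrdef]; exact KREntrance_mem S (n + 1) y)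
    have htB : (⇑T)^[t] y ∈ KRBase S n := KREntrance_mem S n y
    have hdiff : ‖krE θ - 1‖ * δ < 2 * (η * δ) := by
      have h1 : (krE θ - 1) * f ((⇑T)^[t] y) = f ((⇑T)^[r] y) - f ((⇑T)^[t] y) := by
        rw [hfr]; ring
      have h2 : ‖krE θ - 1‖ * ‖f ((⇑T)^[t] y)‖
          = ‖f ((⇑T)^[r] y) - f ((⇑T)^[t] y)‖ := by
        rw [← norm_mul, h1]
      have h3 := hclose _ hrB _ htB
      have h4 := hδle ((⇑T)^[t] y)
      nlinarith [norm_nonneg (krE θ - 1)]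
    have hlt : ‖krE θ - 1‖ < 2 * η := by
      have h5 : ‖krE θ - 1‖ * δ < (2 * η) * δ := by linarith
      exact lt_of_mul_lt_mul_right h5 hδpos.le
    refine ⟨round θ, ?_⟩
    have hu : |θ - round θ| ≤ 1 / 2 := abs_sub_round θ
    have hEeq : krE (θ - round θ) = krE θ := by
      rw [show (θ - (round θ : ℝ)) = θ + (-(round θ) : ℤ) by push_cast; ring,
        krE_add, krE_int, mul_one]
    have h5 := krE_lower hu
    rw [hEeq] at h5
    linarith
  have hbound : ∀ x : X, |∑ k, (KRSuffix S n x k : ℝ) * v k| ≤ η := fun x =>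
    (KRkey S n v (fun k => hw n k) _ x rfl).2 η hη0.le hη14 hall
  have hsup : (⨆ x : X, |∑ k, (KRSuffix S n x k : ℝ) * v k|) ≤ η := ciSup_le hbound
  have hsup0 : 0 ≤ ⨆ x : X, |∑ k, (KRSuffix S n x k : ℝ) * v k| :=
    Real.iSup_nonneg fun x => abs_nonneg _
  rw [Real.dist_eq, sub_zero, abs_of_nonneg hsup0]
  exact lt_of_le_of_lt hsup hηε
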